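/- Let d₁, d₂ ≥ 1 be integers, d = d₁ + d₂, and z ∈ ℂ with Re(z) > 0. For every x₁ ∈ ℝ^{d₁} with x₁ ≠ 0 (or with d₁ = 1 and x₁ arbitrary), the function x₂ ↦ G_z^d(x₁, x₂) is integrable on ℝ^{d₂} and ∫_{ℝ^{d₂}} G_z^d(x₁, x₂) dx₂ = G_z^{d₁}(x₁). -/

import Mathlib

set_option maxHeartbeats 1000000
open MeasureTheory Real Set

/-- The Green's function `G_z^d` of `−Δ + z` on `ℝ^d`, defined via the heat kernel. -/
noncomputable def GreenFnC (d : ℕ) (z : ℂ) (x : EuclideanSpace ℝ (Fin d)) : ℂ :=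
  ∫ t in Set.Ioi (0 : ℝ),
    (((4 * π * t) ^ (-(d : ℝ) / 2) : ℝ) : ℂ) *
      Complex.exp (-((‖x‖ ^ 2 / (4 * t) : ℝ) : ℂ) - z * (t : ℂ))

/-- Concatenation `ℝ^{d₁} × ℝ^{d₂} → ℝ^{d₁+d₂}`, writing `x = (x₁, x₂)`. -/
noncomputable def app2 {d₁ d₂ : ℕ} (x₁ : EuclideanSpace ℝ (Fin d₁))
    (x₂ : EuclideanSpace ℝ (Fin d₂)) : EuclideanSpace ℝ (Fin (d₁ + d₂)) :=
  (EuclideanSpace.equiv (Fin (d₁ + d₂)) ℝ).symm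
    (Fin.append (fun i => x₁ i) (fun i => x₂ i))



lemma t_meas (d : ℕ) (a c : ℝ) :
    Measurable (fun t : ℝ => (4*π*t) ^ (-(d:ℝ)/2) * rexp (-(a/(4*t)) - c*t)) := by
  fun_prop

lemma t_bound_Ioc (d : ℕ) (hd : 1 ≤ d) (a c : ℝ) (ha : 0 ≤ a) (hc : 0 < c)
    (h : 0 < a ∨ d = 1) :
    ∃ C : ℝ, ∀ t ∈ Ioc (0:ℝ) 1,
      (4*π*t) ^ (-(d:ℝ)/2) * rexp (-(a/(4*t)) - c*t) ≤ C * t ^ (-(1:ℝ)/2) := by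
  rcases h with ha' | hd1
  · refine ⟨(4*π) ^ (-(d:ℝ)/2) * ((d.factorial : ℝ) * (4/a)^d), fun t ht => ?_⟩
    obtain ⟨ht0, ht1⟩ := ht
    have hsplit : (4*π*t) ^ (-(d:ℝ)/2) = (4*π)^(-(d:ℝ)/2) * t^(-(d:ℝ)/2) :=
      Real.mul_rpow (by positivity) ht0.le
    have hexp : rexp (-(a/(4*t)) - c*t) ≤ (d.factorial : ℝ) * (4*t/a)^d := by
      have h1 : rexp (-(a/(4*t)) - c*t) ≤ (rexp (a/(4*t)))⁻¹ := by
        rw [← Real.exp_neg]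
        apply Real.exp_le_exp.2; nlinarith
      have h2 : (a/(4*t))^d / (d.factorial : ℝ) ≤ rexp (a/(4*t)) :=
        Real.pow_div_factorial_le_exp (x := a/(4*t)) (by positivity) d
      have hx : (0:ℝ) < (a/(4*t))^d / (d.factorial : ℝ) := by positivity
      calc rexp (-(a/(4*t)) - c*t) ≤ (rexp (a/(4*t)))⁻¹ := h1
        _ ≤ ((a/(4*t))^d / (d.factorial : ℝ))⁻¹ := by
            apply inv_anti₀ hx h2
        _ = (d.factorial : ℝ) * (4*t/a)^d := by
            rw [inv_div]
            field_simp
            rw [← mul_pow, div_mul_div_comm, mul_comm a, div_self (by positivity), one_pow]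
    calc (4*π*t) ^ (-(d:ℝ)/2) * rexp (-(a/(4*t)) - c*t)
        ≤ (4*π)^(-(d:ℝ)/2) * t^(-(d:ℝ)/2) * ((d.factorial : ℝ) * (4*t/a)^d) := by
          rw [hsplit]
          exact mul_le_mul_of_nonneg_left hexp (by positivity)
      _ = (4*π)^(-(d:ℝ)/2) * ((d.factorial : ℝ) * (4/a)^d) * (t^(-(d:ℝ)/2) * t^(d:ℕ)) := by
          rw [div_pow, div_pow, mul_pow]
          ring
      _ ≤ (4*π)^(-(d:ℝ)/2) * ((d.factorial : ℝ) * (4/a)^d) * 1 := by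
          apply mul_le_mul_of_nonneg_left _ (by positivity)
          rw [← Real.rpow_natCast t d, ← Real.rpow_add ht0]
          apply Real.rpow_le_one ht0.le ht1
          have : (1:ℝ) ≤ (d:ℝ) := by exact_mod_cast hd
          linarith
      _ ≤ (4*π)^(-(d:ℝ)/2) * ((d.factorial : ℝ) * (4/a)^d) * (t ^ (-(1:ℝ)/2)) := by
          apply mul_le_mul_of_nonneg_left _ (by positivity)
          apply Real.one_le_rpow_of_pos_of_le_one_of_nonpos ht0 ht1
          norm_num
  · subst hd1
    refine ⟨(4*π) ^ (-(1:ℝ)/2), fun t ht => ?_⟩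
    obtain ⟨ht0, ht1⟩ := ht
    have hsplit : (4*π*t) ^ (-((1:ℕ):ℝ)/2) = (4*π)^(-(1:ℝ)/2) * t^(-(1:ℝ)/2) := by
      rw [Nat.cast_one, Real.mul_rpow (by positivity) ht0.le]
    rw [Nat.cast_one] at hsplit ⊢
    rw [hsplit]
    calc (4*π)^(-(1:ℝ)/2) * t^(-(1:ℝ)/2) * rexp (-(a/(4*t)) - c*t)
        ≤ (4*π)^(-(1:ℝ)/2) * t^(-(1:ℝ)/2) * 1 := by
          apply mul_le_mul_of_nonneg_left _ (by positivity)
          rw [← Real.exp_zero]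
          apply Real.exp_le_exp.2
          have : 0 ≤ a/(4*t) := by positivity
          nlinarith
      _ = (4*π)^(-(1:ℝ)/2) * t^(-(1:ℝ)/2) := by ring

lemma t_integrable (d : ℕ) (hd : 1 ≤ d) (a c : ℝ) (ha : 0 ≤ a) (hc : 0 < c)
    (h : 0 < a ∨ d = 1) :
    IntegrableOn (fun t : ℝ => (4*π*t) ^ (-(d:ℝ)/2) * rexp (-(a/(4*t)) - c*t)) (Ioi 0) := by
  have hmeas := t_meas d a c
  rw [← Ioc_union_Ioi_eq_Ioi (zero_le_one' ℝ)]
  apply IntegrableOn.union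
  · obtain ⟨C, hC⟩ := t_bound_Ioc d hd a c ha hc h
    have hg : IntegrableOn (fun t : ℝ => C * t ^ (-(1:ℝ)/2)) (Ioc 0 1) := by
      apply Integrable.const_mul
      have := intervalIntegral.intervalIntegrable_rpow' (a := 0) (b := 1) (r := -(1:ℝ)/2)
        (by norm_num)
      rwa [intervalIntegrable_iff_integrableOn_Ioc_of_le zero_le_one] at this
    apply Integrable.mono hg hmeas.aestronglyMeasurable.restrict
    filter_upwards [ae_restrict_mem measurableSet_Ioc] with t ht
    rw [Real.norm_eq_abs, Real.norm_eq_abs]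
    have ht0 : (0:ℝ) < t := ht.1
    have hfnn : (0:ℝ) ≤ (4*π*t) ^ (-(d:ℝ)/2) * rexp (-(a/(4*t)) - c*t) :=
      mul_nonneg (Real.rpow_nonneg (by positivity) _) (Real.exp_pos _).le
    rw [abs_of_nonneg hfnn]
    exact (hC t ht).trans (le_abs_self _)
  · have hg : IntegrableOn (fun t : ℝ => rexp (-(c*t))) (Ioi 1) := by
      simpa [neg_mul] using exp_neg_integrableOn_Ioi 1 hc
    apply Integrable.mono hg hmeas.aestronglyMeasurable.restrict
    filter_upwards [ae_restrict_mem measurableSet_Ioi] with t ht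
    have ht1 : (1:ℝ) < t := ht
    have h4πt : (1:ℝ) ≤ 4*π*t := by nlinarith [pi_gt_three]
    have ht0 : (0:ℝ) < t := lt_trans one_pos ht1
    have hfnn : (0:ℝ) ≤ (4*π*t) ^ (-(d:ℝ)/2) * rexp (-(a/(4*t)) - c*t) :=
      mul_nonneg (Real.rpow_nonneg (by positivity) _) (Real.exp_pos _).le
    rw [Real.norm_eq_abs, Real.norm_eq_abs, abs_of_nonneg hfnn,
      abs_of_nonneg (Real.exp_pos _).le]
    calc (4*π*t) ^ (-(d:ℝ)/2) * rexp (-(a/(4*t)) - c*t) ≤ 1 * rexp (-(a/(4*t)) - c*t) := by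
          apply mul_le_mul_of_nonneg_right _ (Real.exp_pos _).le
          exact Real.rpow_le_one_of_one_le_of_nonpos h4πt (by rw [neg_div]; exact neg_nonpos.2 (by positivity))
      _ ≤ rexp (-(c*t)) := by
          rw [one_mul]
          apply Real.exp_le_exp.2
          have : 0 ≤ a/(4*t) := by positivity
          linarith


lemma slice_int (d₂ : ℕ) (b : ℂ) (hb : 0 < b.re) :
    Integrable (fun v : EuclideanSpace ℝ (Fin d₂) => Complex.exp (-b * ‖v‖^2)) := by
  simpa using GaussianFourier.integrable_cexp_neg_mul_sq_norm_add hb 0 (0 : EuclideanSpace ℝ (Fin d₂))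

lemma slice_cint (d₂ : ℕ) (b : ℂ) (hb : 0 < b.re) :
    ∫ v : EuclideanSpace ℝ (Fin d₂), Complex.exp (-b * ‖v‖^2) = (↑π/b)^((d₂:ℂ)/2) := by
  rw [GaussianFourier.integral_cexp_neg_mul_sq_norm hb, finrank_euclideanSpace_fin]

lemma slice_rint (d₂ : ℕ) (b : ℝ) (hb : 0 < b) :
    ∫ v : EuclideanSpace ℝ (Fin d₂), rexp (-b * ‖v‖^2) = (π/b)^((d₂:ℝ)/2) := by
  rw [GaussianFourier.integral_rexp_neg_mul_sq_norm hb, finrank_euclideanSpace_fin]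

section aux
variable (d₁ d₂ : ℕ) (z : ℂ) (x₁ : EuclideanSpace ℝ (Fin d₁))

noncomputable def Ffun (t : ℝ) (x₂ : EuclideanSpace ℝ (Fin d₂)) : ℂ :=
  (((4 * π * t) ^ (-((d₁ + d₂ : ℕ) : ℝ) / 2) : ℝ) : ℂ) *
    Complex.exp (-(((‖x₁‖ ^ 2 + ‖x₂‖ ^ 2) / (4 * t) : ℝ) : ℂ) - z * (t : ℂ))

noncomputable def Kfun (d : ℕ) (t : ℝ) : ℂ :=
  (((4 * π * t) ^ (-(d : ℝ) / 2) : ℝ) : ℂ) *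
    Complex.exp (-((‖x₁‖ ^ 2 / (4 * t) : ℝ) : ℂ) - z * (t : ℂ))

lemma Fmeas : Measurable (fun p : ℝ × EuclideanSpace ℝ (Fin d₂) => Ffun d₁ d₂ z x₁ p.1 p.2) := by
  unfold Ffun
  fun_prop

lemma Fsplit {t : ℝ} (ht : 0 < t) (x₂ : EuclideanSpace ℝ (Fin d₂)) :
    Ffun d₁ d₂ z x₁ t x₂ =
      Kfun d₁ z x₁ (d₁ + d₂) t * Complex.exp (-(((1 / (4 * t) : ℝ)) : ℂ) * (‖x₂‖ : ℂ) ^ 2) := by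
  unfold Ffun Kfun
  conv_rhs => rw [mul_assoc, ← Complex.exp_add]
  congr 1
  have htC : (t : ℂ) ≠ 0 := by exact_mod_cast ht.ne'
  push_cast
  field_simp
  ring

lemma Fnorm {t : ℝ} (ht : 0 < t) (x₂ : EuclideanSpace ℝ (Fin d₂)) :
    ‖Ffun d₁ d₂ z x₁ t x₂‖ =
      ((4 * π * t) ^ (-((d₁ + d₂ : ℕ) : ℝ) / 2) : ℝ) *
        (rexp (-(‖x₁‖^2 / (4 * t)) - z.re * t) * rexp (-((1 / (4 * t))) * ‖x₂‖ ^ 2)) := by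
  unfold Ffun
  rw [norm_mul, Complex.norm_real, Real.norm_eq_abs,
    abs_of_nonneg (Real.rpow_nonneg (by positivity) _), Complex.norm_exp]
  congr 1
  rw [← Real.exp_add]
  congr 1
  simp only [Complex.sub_re, Complex.neg_re, Complex.ofReal_re, Complex.mul_re,
    Complex.ofReal_im, Complex.re_ofNat]
  field_simp
  ring


lemma Fslice_integrable {t : ℝ} (ht : 0 < t) :
    Integrable (fun x₂ : EuclideanSpace ℝ (Fin d₂) => Ffun d₁ d₂ z x₁ t x₂) := by
  have hb : 0 < (((1 / (4 * t) : ℝ)) : ℂ).re := by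
    rw [Complex.ofReal_re]; positivity
  have h0 : Integrable (fun v : EuclideanSpace ℝ (Fin d₂) =>
      Complex.exp (-(((1 / (4 * t) : ℝ)) : ℂ) * (‖v‖ : ℂ) ^ 2)) := by
    have := slice_int d₂ _ hb
    simpa using this
  have := h0.const_mul (Kfun d₁ z x₁ (d₁ + d₂) t)
  apply this.congr
  filter_upwards with x₂
  rw [Fsplit d₁ d₂ z x₁ ht x₂]

lemma Fnorm_integral {t : ℝ} (ht : 0 < t) :
    ∫ x₂ : EuclideanSpace ℝ (Fin d₂), ‖Ffun d₁ d₂ z x₁ t x₂‖ =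
      ((4 * π * t) ^ (-(d₁ : ℝ) / 2) : ℝ) * rexp (-(‖x₁‖^2 / (4 * t)) - z.re * t) := by
  have hpos : (0:ℝ) < 4 * π * t := by positivity
  have hb : (0:ℝ) < 1 / (4 * t) := by positivity
  simp_rw [Fnorm d₁ d₂ z x₁ ht]
  rw [integral_const_mul, integral_const_mul, slice_rint d₂ _ hb]
  have h1 : π / (1 / (4 * t)) = 4 * π * t := by field_simp
  rw [h1, ← mul_assoc, mul_comm ((4 * π * t) ^ (-((d₁ + d₂ : ℕ) : ℝ) / 2)) _, mul_assoc,
    ← Real.rpow_add hpos, mul_comm]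
  congr 2
  push_cast
  ring

lemma Fint {t : ℝ} (ht : 0 < t) :
    ∫ x₂ : EuclideanSpace ℝ (Fin d₂), Ffun d₁ d₂ z x₁ t x₂ = Kfun d₁ z x₁ d₁ t := by
  have hpos : (0:ℝ) < 4 * π * t := by positivity
  have hb : 0 < (((1 / (4 * t) : ℝ)) : ℂ).re := by
    rw [Complex.ofReal_re]; positivity
  simp_rw [Fsplit d₁ d₂ z x₁ ht]
  rw [integral_const_mul, slice_cint d₂ _ hb]
  have h1 : ((π : ℂ) / ((1 / (4 * t) : ℝ) : ℂ)) = (((4 * π * t : ℝ)) : ℂ) := by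
    rw [show ((π : ℝ) : ℂ) = (((π : ℝ)) : ℂ) from rfl, ← Complex.ofReal_div]
    norm_cast
    field_simp
  have h2 : ((d₂ : ℂ) / 2) = (((d₂ / 2 : ℝ)) : ℂ) := by push_cast; ring
  rw [h1, h2, ← Complex.ofReal_cpow hpos.le]
  unfold Kfun
  rw [mul_right_comm, ← Complex.ofReal_mul, ← Real.rpow_add hpos]
  congr 3
  push_cast
  ring

end aux


lemma norm_sq_eq' {d : ℕ} (x : EuclideanSpace ℝ (Fin d)) : ‖x‖^2 = ∑ i, x i ^ 2 := by
  rw [EuclideanSpace.norm_eq, sq_sqrt (by positivity)]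
  simp [sq_abs]

lemma norm_app2_sq {d₁ d₂ : ℕ} (x₁ : EuclideanSpace ℝ (Fin d₁)) (x₂ : EuclideanSpace ℝ (Fin d₂)) :
    ‖app2 x₁ x₂‖ ^ 2 = ‖x₁‖ ^ 2 + ‖x₂‖ ^ 2 := by
  simp only [norm_sq_eq']
  have : ∀ i, app2 x₁ x₂ i = Fin.append (fun i => x₁ i) (fun i => x₂ i) i := fun i => rfl
  simp only [this]
  rw [Fin.sum_univ_add]
  simp


/-- Lemma A.1 (vi): for `x₁ ≠ 0` (or `d₁ = 1`), the function `x₂ ↦ G_z^{d₁+d₂}(x₁,x₂)`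
is integrable on `ℝ^{d₂}` and `∫ G_z^{d₁+d₂}(x₁,x₂) dx₂ = G_z^{d₁}(x₁)`. -/
theorem stmt11 (d₁ d₂ : ℕ) (h₁ : 1 ≤ d₁) (h₂ : 1 ≤ d₂) (z : ℂ) (hz : 0 < z.re)
    (x₁ : EuclideanSpace ℝ (Fin d₁)) (hx₁ : x₁ ≠ 0 ∨ d₁ = 1) :
    Integrable
      (fun x₂ : EuclideanSpace ℝ (Fin d₂) => GreenFnC (d₁ + d₂) z (app2 x₁ x₂)) volume ∧
    (∫ x₂ : EuclideanSpace ℝ (Fin d₂), GreenFnC (d₁ + d₂) z (app2 x₁ x₂)) =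
      GreenFnC d₁ z x₁ := by
  have hG : (fun x₂ : EuclideanSpace ℝ (Fin d₂) => GreenFnC (d₁ + d₂) z (app2 x₁ x₂)) =
      fun x₂ => ∫ t in Ioi (0:ℝ), Ffun d₁ d₂ z x₁ t x₂ := by
    funext x₂
    unfold GreenFnC Ffun
    simp only [norm_app2_sq]
  have haor : 0 < ‖x₁‖^2 ∨ d₁ = 1 := by
    rcases hx₁ with h | h
    · left; have : 0 < ‖x₁‖ := norm_pos_iff.2 h; positivity
    · right; exact h
  have hti := t_integrable d₁ h₁ (‖x₁‖^2) z.re (by positivity) hz haor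
  have hint : Integrable (fun p : ℝ × EuclideanSpace ℝ (Fin d₂) => Ffun d₁ d₂ z x₁ p.1 p.2)
      ((volume.restrict (Ioi 0)).prod volume) := by
    rw [integrable_prod_iff (Fmeas d₁ d₂ z x₁).aestronglyMeasurable]
    constructor
    · filter_upwards [ae_restrict_mem measurableSet_Ioi] with t ht
      exact Fslice_integrable d₁ d₂ z x₁ ht
    · apply hti.congr
      filter_upwards [ae_restrict_mem measurableSet_Ioi] with t ht
      exact (Fnorm_integral d₁ d₂ z x₁ ht).symm
  constructor
  · rw [hG]; exact hint.integral_prod_right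
  · rw [hG]
    have hswap := integral_integral_swap (f := fun t (x₂ : EuclideanSpace ℝ (Fin d₂)) =>
      Ffun d₁ d₂ z x₁ t x₂) (μ := volume.restrict (Ioi 0)) (ν := volume) hint
    rw [← hswap]
    unfold GreenFnC
    apply setIntegral_congr_fun measurableSet_Ioi
    intro t ht
    beta_reduce
    rw [Fint d₁ d₂ z x₁ ht]
    rfl
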